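/- For the 6×6 matrix H(g,g;z) with |g| < 1 and |z| < 1, the matrix Ω = Θ^{1/2} (with Θ the diagonal positive metric diag((1-g)(1-z)/(1+z), 1-g, 1+g, 1+g, 1-g, (1-g)(1-z)/(1+z))) yields a symmetric matrix 𝔥 = Ω H Ω⁻¹, i.e., 𝔥ᵀ = 𝔥. -/

import Mathlib

open Matrix

lemma stmt18_aux {a b c d : ℝ} (ha : 0 < a) (hb : 0 < b) (h : a * c = b * d) :
    Real.sqrt a * c * (Real.sqrt b)⁻¹ = Real.sqrt b * d * (Real.sqrt a)⁻¹ := by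
  have ha' : Real.sqrt a ≠ 0 := ne_of_gt (Real.sqrt_pos.mpr ha)
  have hb' : Real.sqrt b ≠ 0 := ne_of_gt (Real.sqrt_pos.mpr hb)
  have h2 : Real.sqrt a * Real.sqrt a = a := Real.mul_self_sqrt ha.le
  have h3 : Real.sqrt b * Real.sqrt b = b := Real.mul_self_sqrt hb.le
  field_simp
  calc Real.sqrt a ^ 2 * c = (Real.sqrt a * Real.sqrt a) * c := by ring
    _ = a * c := by rw [h2]
    _ = b * d := h
    _ = (Real.sqrt b * Real.sqrt b) * d := by rw [h3]
    _ = Real.sqrt b ^ 2 * d := by ring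

lemma stmt18_cons_val_five {α : Type*} (x : α) (u : Fin 5 → α) :
    Matrix.vecCons x u (5 : Fin 6) = u 4 := rfl

lemma stmt18_entry (d e : Fin 6 → ℝ) (M : Matrix (Fin 6) (Fin 6) ℝ) (i j : Fin 6) :
    (Matrix.diagonal d * M * Matrix.diagonal e) i j = d i * M i j * e j := by
  rw [Matrix.mul_diagonal, Matrix.diagonal_mul]

theorem stmt18 (g z : ℝ) (hg : |g| < 1) (hz : |z| < 1) :
    let H : Matrix (Fin 6) (Fin 6) ℝ :=
      !![2, -1-z, 0, 0, 0, 0;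
         -1+z, 3, -1-g, -1-g, 0, 0;
         0, -1+g, 2, 0, -1+g, 0;
         0, -1+g, 0, 2, -1+g, 0;
         0, 0, -1-g, -1-g, 3, -1+z;
         0, 0, 0, 0, -1-z, 2]
    let Ω : Matrix (Fin 6) (Fin 6) ℝ :=
      Matrix.diagonal (fun i =>
        Real.sqrt (![(1-g)*(1-z)/(1+z), 1-g, 1+g, 1+g, 1-g, (1-g)*(1-z)/(1+z)] i))
    (Ω * H * Ω⁻¹)ᵀ = Ω * H * Ω⁻¹ := by
  intro H Ω
  obtain ⟨hg1, hg2⟩ := abs_lt.mp hg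
  obtain ⟨hz1, hz2⟩ := abs_lt.mp hz
  have pg1 : (0:ℝ) < 1 - g := by linarith
  have pg2 : (0:ℝ) < 1 + g := by linarith
  have pz1 : (0:ℝ) < 1 - z := by linarith
  have pz2 : (0:ℝ) < 1 + z := by linarith
  have hz2' : (1:ℝ) + z ≠ 0 := ne_of_gt pz2
  have pq : (0:ℝ) < (1-g)*(1-z)/(1+z) := by positivity
  set v : Fin 6 → ℝ := ![(1-g)*(1-z)/(1+z), 1-g, 1+g, 1+g, 1-g, (1-g)*(1-z)/(1+z)] with hv
  have hvpos : ∀ i, 0 < v i := by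
    intro i; fin_cases i <;> simp [hv, stmt18_cons_val_five] <;>
      first | exact pq | linarith
  have hΩinv : Ω⁻¹ = Matrix.diagonal (fun i => (Real.sqrt (v i))⁻¹) := by
    apply inv_eq_right_inv
    rw [show Ω = Matrix.diagonal (fun i => Real.sqrt (v i)) from rfl,
      Matrix.diagonal_mul_diagonal]
    ext i j
    by_cases h : i = j
    · subst h
      simp [Matrix.diagonal_apply_eq,
        mul_inv_cancel₀ (ne_of_gt (Real.sqrt_pos.mpr (hvpos i)))]
    · simp [Matrix.diagonal_apply_ne _ h, Matrix.one_apply_ne h]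
  rw [hΩinv]
  ext i j
  rw [Matrix.transpose_apply,
    show Ω = Matrix.diagonal (fun i => Real.sqrt (v i)) from rfl,
    stmt18_entry, stmt18_entry]
  refine stmt18_aux (hvpos j) (hvpos i) ?_
  fin_cases i <;> fin_cases j <;>
    simp [H, hv, stmt18_cons_val_five, Matrix.vecHead, Matrix.vecTail, Function.comp] <;>
    (try field_simp) <;> ring
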